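/- For any integer m ≥ 1 and any sequence c : ℕ → ℤ satisfying c(n+m+1) + c(n) = [c(n+m)]₊ + [c(n+1)]₊ for all n ≥ 0, there exists N ∈ ℕ such that for all n ≥ N: min(0, c(n+m) + min(0, −c(n))) = 0. (This says that the exponent of each frozen variable in the tropical prefactor γⱼ = 1 ⊕̂ y₁;ⱼ ⊕̂ y₁;ⱼ·(y₁;ⱼ₋ₘ)⁻¹ vanishes for all sufficiently large j, i.e. γⱼ = 1 eventually.) -/
import Mathlib


/-- The exponent of each frozen variable in the tropical prefactor
`γⱼ = 1 ⊕̂ y₁;ⱼ ⊕̂ y₁;ⱼ·(y₁;ⱼ₋ₘ)⁻¹` vanishes for all sufficiently large `j`. -/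
theorem tropical_prefactor_eventually_one (m : ℕ) (hm : 1 ≤ m) (c : ℕ → ℤ)
    (hrec : ∀ n : ℕ, c (n + m + 1) + c n = max 0 (c (n + m)) + max 0 (c (n + 1))) :
    ∃ N : ℕ, ∀ n ≥ N, min 0 (c (n + m) + min 0 (-(c n))) = 0 := by
  set a : ℕ → ℤ := fun n => c (n + m) - max 0 (c n) with ha
  have key : ∀ n, a (n + 1) = max 0 (c (n + m)) - c n := by
    intro n
    have h := hrec n
    have he : n + 1 + m = n + m + 1 := by omega
    simp only [ha, he]
    linarith
  have mono : ∀ n, a n ≤ a (n + 1) := by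
    intro n
    rw [key n]
    have h1 : c (n + m) ≤ max 0 (c (n + m)) := le_max_right _ _
    have h2 : c n ≤ max 0 (c n) := le_max_right _ _
    simp only [ha]
    linarith
  have monoF : Monotone a := monotone_nat_of_le_succ mono
  -- rewrite the goal in terms of a
  have goal_iff : ∀ n, 0 ≤ a n → min 0 (c (n + m) + min 0 (-(c n))) = 0 := by
    intro n hn
    have hmin : min 0 (-(c n)) = -max 0 (c n) := by
      rw [← neg_zero, min_neg_neg, neg_zero]
    rw [hmin]
    have : c (n + m) + -max 0 (c n) = a n := by simp [ha, sub_eq_add_neg]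
    rw [this]
    exact min_eq_left hn
  by_cases h : ∃ n, 0 ≤ a n
  · obtain ⟨N, hN⟩ := h
    exact ⟨N, fun n hn => goal_iff n (le_trans hN (monoF hn))⟩
  · exfalso
    push_neg at h
    obtain ⟨M, ⟨n₀, hn₀⟩, hub⟩ :=
      Int.exists_greatest_of_bdd (P := fun z => ∃ n, a n = z)
        ⟨0, fun z ⟨n, hn⟩ => hn ▸ (h n).le⟩ ⟨a 0, 0, rfl⟩
    have hMneg : M < 0 := hn₀ ▸ h n₀
    have haconst : ∀ n, n₀ ≤ n → a n = M := by
      intro n hn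
      exact le_antisymm (hub _ ⟨n, rfl⟩) (hn₀ ▸ monoF hn)
    have hstep : ∀ n, n₀ ≤ n → 0 ≤ c n ∧ c (n + m) = c n + M := by
      intro n hn
      have h1 : a n = M := haconst n hn
      have h2 : a (n + 1) = M := haconst (n + 1) (by omega)
      rw [key n] at h2
      have e1 : c (n + m) ≤ max 0 (c (n + m)) := le_max_right _ _
      have e2 : c n ≤ max 0 (c n) := le_max_right _ _
      have h1' : c (n + m) - max 0 (c n) = M := h1
      have hcn : max 0 (c n) = c n := by linarith
      have hcnm : max 0 (c (n + m)) = c (n + m) := by linarith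
      constructor
      · have : (0 : ℤ) ≤ max 0 (c n) := le_max_left _ _
        omega
      · omega
    have hiter : ∀ k : ℕ, c (n₀ + k * m) = c n₀ + k * M := by
      intro k
      induction k with
      | zero => simp
      | succ k ih =>
        have hle : n₀ ≤ n₀ + k * m := by omega
        have := (hstep (n₀ + k * m) hle).2
        have he : n₀ + (k + 1) * m = n₀ + k * m + m := by ring
        rw [he, this, ih]
        push_cast
        ring
    set k : ℕ := (c n₀).toNat + 1 with hk
    have h1 := hiter k
    have h2 : 0 ≤ c (n₀ + k * m) := (hstep (n₀ + k * m) (by omega)).1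
    have hkM : (k : ℤ) * M ≤ -(k : ℤ) := by
      have : M ≤ -1 := by omega
      nlinarith [Int.ofNat_nonneg k]
    have hck : c n₀ < (k : ℤ) := by
      simp only [hk]
      push_cast
      omega
    omega
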